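/- Let M = (F, r) be a maniplex of rank n, let G be a group and let ζ be a voltage assignment on M. Then the derived cover Cov(M, ζ) is a maniplex of rank n if and only if (a) the group generated by the permutations r̄_0, …, r̄_{n−1} acts transitively on F × G, and (b) for every flag u and all colours i, j with |i − j| > 1 one has ζ(r_j u, i)·ζ(u, j) = ζ(r_i u, j)·ζ(u, i) (i.e., every closed walk of length four in M with alternating colours i, j has trivial net voltage). -/
import Mathlib



/-- The orbit of a flag `u` under the subgroup generated by `{r j : j ∈ J}`. -/
def MOrbit {n : ℕ} {F : Type*} (r : Fin n → Equiv.Perm F) (J : Set (Fin n)) (u : F) :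
    Set F :=
  {v | ∃ g ∈ Subgroup.closure (r '' J), v = g u}

/-- `(F, r)` is a maniplex of rank `n`. -/
def IsManiplex {F : Type*} (n : ℕ) (r : Fin n → Equiv.Perm F) : Prop :=
  Nonempty F ∧
  (∀ (i : Fin n) (u : F), r i (r i u) = u) ∧
  (∀ (i : Fin n) (u : F), r i u ≠ u) ∧
  (∀ u v : F, v ∈ MOrbit r Set.univ u) ∧
  ∀ i j : Fin n, 1 < |(i : ℤ) - (j : ℤ)| →
    (∀ u : F, r i (r j (r i (r j u))) = u) ∧ ∀ u : F, r i (r j u) ≠ u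

/-- The `i`-face containing the flag `u`. -/
def MFace {n : ℕ} {F : Type*} (r : Fin n → Equiv.Perm F) (i : Fin n) (u : F) : Set F :=
  MOrbit r {i}ᶜ u

/-- A maniplex is faithful if the intersection of all faces containing a flag is a singleton. -/
def IsFaithful {n : ℕ} {F : Type*} (r : Fin n → Equiv.Perm F) : Prop :=
  ∀ u : F, (⋂ i : Fin n, MFace r i u) = {u}

/-- `O` is a face of rank `k ∈ {-1, …, n}`, where the improper ranks `-1` and `n`
give the whole flag set. -/
def IsRankFace {n : ℕ} {F : Type*} (r : Fin n → Equiv.Perm F) (k : ℤ) (O : Set F) : Prop :=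
  ((∃ i : Fin n, (i : ℤ) = k) ∧ ∃ u : F, O = MOrbit r {j : Fin n | (j : ℤ) ≠ k} u) ∨
  ((¬ ∃ i : Fin n, (i : ℤ) = k) ∧ O = Set.univ)

/-- A maniplex is thin if any incident pair of an `(i-1)`-face and `(i+1)`-face lies in
exactly two `i`-faces. -/
def IsThin {n : ℕ} {F : Type*} (r : Fin n → Equiv.Perm F) : Prop :=
  ∀ (i : Fin n) (Fm Fp : Set F),
    IsRankFace r ((i : ℤ) - 1) Fm → IsRankFace r ((i : ℤ) + 1) Fp →
    (Fm ∩ Fp).Nonempty →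
    ∃ O₁ O₂ : Set F, O₁ ≠ O₂ ∧
      {O : Set F | (∃ u : F, O = MFace r i u) ∧ (O ∩ (Fm ∩ Fp)).Nonempty} = {O₁, O₂}

/-- The component intersection property. -/
def HasCIP {n : ℕ} {F : Type*} (r : Fin n → Equiv.Perm F) : Prop :=
  ∀ (k : ℕ) (j : Fin k → Fin n) (H : Fin k → Set F),
    Function.Injective j →
    (∀ l, ∃ u : F, H l = MFace r (j l) u) →
    (∀ l m, (H l ∩ H m).Nonempty) →
    ∀ u v : F, u ∈ ⋂ l, H l → v ∈ ⋂ l, H l →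
      v ∈ MOrbit r {m : Fin n | m ∉ Set.range j} u

/-- An automorphism of a maniplex: a permutation of the flags commuting with every `r i`. -/
def IsManiplexAuto {n : ℕ} {F : Type*} (r : Fin n → Equiv.Perm F) (φ : Equiv.Perm F) : Prop :=
  ∀ (i : Fin n) (u : F), φ (r i u) = r i (φ u)

/-- A maniplex is regular if its automorphism group is transitive on flags. -/
def IsRegularManiplex {n : ℕ} {F : Type*} (r : Fin n → Equiv.Perm F) : Prop :=
  ∀ u v : F, ∃ φ : Equiv.Perm F, IsManiplexAuto r φ ∧ φ u = v

/-- A face `H`, an orbit of the subgroup generated by `{r j : j ∈ J}`, is bipartite. -/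
def FaceBipartite {n : ℕ} {F : Type*} (r : Fin n → Equiv.Perm F) (J : Set (Fin n))
    (H : Set F) : Prop :=
  ∃ f : F → ZMod 2, ∀ j ∈ J, ∀ x ∈ H, f (r j x) = f x + 1

/-- The number of `i`-faces of a maniplex. -/
noncomputable def NumFaces {n : ℕ} {F : Type*} (r : Fin n → Equiv.Perm F) (i : Fin n) : ℕ :=
  {O : Set F | ∃ u : F, O = MFace r i u}.ncard

/-- The canonical double cover of a maniplex. -/
def cdc {n : ℕ} {F : Type*} (r : Fin n → Equiv.Perm F) (i : Fin n) :
    Equiv.Perm (F × ZMod 2) :=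
  Equiv.prodCongr (r i) (Equiv.addRight (1 : ZMod 2))

/-- The raviolo of a maniplex of rank `n`: a maniplex of rank `n+1` with two facets. -/
def raviolo {n : ℕ} {F : Type*} (r : Fin n → Equiv.Perm F) (i : Fin (n + 1)) :
    Equiv.Perm (F × ZMod 2) :=
  if h : (i : ℕ) < n then Equiv.prodCongr (r ⟨i, h⟩) (Equiv.refl (ZMod 2))
  else Equiv.prodCongr (Equiv.refl F) (Equiv.addRight (1 : ZMod 2))

/-- A voltage assignment on a maniplex. -/
def IsVoltage {n : ℕ} {F : Type*} {G : Type*} [Group G] (r : Fin n → Equiv.Perm F)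
    (ζ : F × Fin n → G) : Prop :=
  ∀ (u : F) (i : Fin n), ζ (r i u, i) = (ζ (u, i))⁻¹

/-- The permutations of the derived cover of a maniplex with voltage assignment `ζ`. -/
def mcov {n : ℕ} {F : Type*} {G : Type*} [Group G] (r : Fin n → Equiv.Perm F)
    (ζ : F × Fin n → G) (i : Fin n) : Equiv.Perm (F × G) where
  toFun p := (r i p.1, ζ (p.1, i) * p.2)
  invFun p := ((r i).symm p.1, (ζ ((r i).symm p.1, i))⁻¹ * p.2)
  left_inv p := by simp
  right_inv p := by simp

/-- The derived cover of a maniplex is a maniplex iff it is connected and every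
closed `4`-walk of alternating non-consecutive colours has trivial net voltage. -/
theorem aux_comm {n : ℕ} {F : Type*} (r : Fin n → Equiv.Perm F) {i j : Fin n}
    (h : ∀ u : F, r i (r j (r i (r j u))) = u)
    (hinv : ∀ (i : Fin n) (u : F), r i (r i u) = u) :
    ∀ v : F, r i (r j v) = r j (r i v) := by
  intro v
  have h1 := h (r j v)
  rw [hinv j v] at h1
  have := congrArg (r i) h1
  rw [hinv i] at this
  exact this.symm

theorem aux_grp {G : Type*} [Group G] {a b c d g : G} (h : c * d = b * a) :
    a⁻¹ * (b⁻¹ * (c * (d * g))) = g := by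
  rw [show c * (d * g) = (c * d) * g by rw [mul_assoc], h]
  simp [mul_assoc]

theorem stmt5 {n : ℕ} {F : Type*} [Fintype F] {G : Type*} [Group G]
    (r : Fin n → Equiv.Perm F) (hM : IsManiplex n r)
    (ζ : F × Fin n → G) (hζ : IsVoltage r ζ) :
    IsManiplex n (mcov r ζ) ↔
      ((∀ p q : F × G, q ∈ MOrbit (mcov r ζ) Set.univ p) ∧
        ∀ (u : F) (i j : Fin n), 1 < |(i : ℤ) - (j : ℤ)| →
          ζ (r j u, i) * ζ (u, j) = ζ (r i u, j) * ζ (u, i)) := by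
  obtain ⟨hne, hinv, hfpf, htrans, hcomm⟩ := hM
  have key : ∀ {i j : Fin n}, 1 < |(i : ℤ) - (j : ℤ)| → ∀ u : F,
      r j (r i (r j u)) = r i u := by
    intro i j hij u
    have h1 := (hcomm i j hij).1 u
    have := congrArg (r i) h1
    rwa [hinv i] at this
  have key2 : ∀ {i j : Fin n}, 1 < |(i : ℤ) - (j : ℤ)| → ∀ u : F,
      r i (r j u) = r j (r i u) :=
    fun hij => aux_comm r (fun u => (hcomm _ _ hij).1 u) hinv
  constructor
  · rintro ⟨-, -, -, ht, hc⟩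
    refine ⟨ht, fun u i j hij => ?_⟩
    have h := congrArg Prod.snd ((hc i j hij).1 (u, 1))
    simp only [mcov, Equiv.coe_fn_mk] at h
    rw [key hij u, key2 hij u, hζ, hζ, mul_one] at h
    rw [inv_mul_eq_one] at h
    rw [eq_comm, inv_mul_eq_iff_eq_mul] at h
    exact h
  · rintro ⟨ht, hb⟩
    refine ⟨⟨(hne.some, 1)⟩, ?_, ?_, ht, ?_⟩
    · intro i p
      show (r i (r i p.1), ζ (r i p.1, i) * (ζ (p.1, i) * p.2)) = p
      rw [hinv i, hζ]
      simp
    · intro i p h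
      exact hfpf i p.1 (congrArg Prod.fst h)
    · intro i j hij
      refine ⟨fun p => ?_, fun p h => (hcomm i j hij).2 p.1 (congrArg Prod.fst h)⟩
      show (r i (r j (r i (r j p.1))),
        ζ (r j (r i (r j p.1)), i) * (ζ (r i (r j p.1), j) *
          (ζ (r j p.1, i) * (ζ (p.1, j) * p.2)))) = p
      rw [(hcomm i j hij).1 p.1, key hij p.1, key2 hij p.1, hζ, hζ]
      exact Prod.ext rfl (aux_grp (hb p.1 i j hij))
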